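/- Let G be a minimally bad graph and O = [v_1,…,v_n] a bad connected order of G. If S is a cutset of G, then for every connected component C of G∖S except at most one, max(C) < max(S); furthermore, if C is the unique component with max(C) > max(S), then v_n ∈ C. -/

import Mathlib

open Classical in
noncomputable def greedyStep {V : Type*} (G : SimpleGraph V) (f : V → ℕ) (v : V) : V → ℕ :=
  fun u => if u = v then sInf {c : ℕ | 1 ≤ c ∧ ∀ w, G.Adj v w → f w ≠ c} else f u

noncomputable def greedyFrom {V : Type*} (G : SimpleGraph V) (f : V → ℕ) (l : List V) : V → ℕ :=
  l.foldl (greedyStep G) f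

noncomputable def greedy {V : Type*} (G : SimpleGraph V) (l : List V) : V → ℕ :=
  greedyFrom G (fun _ => 0) l

open Classical in
noncomputable def greedyStart2 {V : Type*} (G : SimpleGraph V) : List V → V → ℕ
  | [] => fun _ => 0
  | v :: rest => greedyFrom G (fun u => if u = v then 2 else 0) rest

noncomputable def chi {V : Type*} [Fintype V] (G : SimpleGraph V) : ℕ :=
  sInf {n : ℕ | G.Colorable n}

open Classical in
noncomputable def idx {V : Type*} (l : List V) (v : V) : ℕ := l.idxOf v

noncomputable def maxIdx {V : Type*} (l : List V) (A : Set V) : ℕ := sSup (idx l '' A)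
noncomputable def minIdx {V : Type*} (l : List V) (A : Set V) : ℕ := sInf (idx l '' A)

def IsConnOrder {V : Type*} (G : SimpleGraph V) (l : List V) : Prop :=
  l.Nodup ∧ (∀ v : V, v ∈ l) ∧
    ∀ i : Fin l.length, 0 < i.1 → ∃ j : Fin l.length, j.1 < i.1 ∧ G.Adj (l.get j) (l.get i)

def GoodOrder {V : Type*} [Fintype V] (G : SimpleGraph V) (l : List V) : Prop :=
  ∀ v : V, greedy G l v ≤ chi G

def Good {V : Type*} [Fintype V] (G : SimpleGraph V) : Prop :=
  ∀ s : Finset V, (G.induce (↑s : Set V)).Connected →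
    ∀ l : List ↥(↑s : Set V), IsConnOrder (G.induce (↑s : Set V)) l →
      GoodOrder (G.induce (↑s : Set V)) l

def BadOrder {V : Type*} [Fintype V] (G : SimpleGraph V) (l : List V) : Prop :=
  IsConnOrder G l ∧ ¬ GoodOrder G l

def MinimallyBad {V : Type*} [Fintype V] (G : SimpleGraph V) : Prop :=
  ¬ Good G ∧ ∀ s : Finset V, s ≠ Finset.univ →
    (G.induce (↑s : Set V)).Connected → Good (G.induce (↑s : Set V))

def IsInducedPath {V : Type*} (G : SimpleGraph V) (P : List V) : Prop :=
  P.Nodup ∧ ∀ i j : Fin P.length,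
    G.Adj (P.get i) (P.get j) ↔ (i.1 + 1 = j.1 ∨ j.1 + 1 = i.1)

def IsFlatPath {V : Type*} (G : SimpleGraph V) (P : List V) : Prop :=
  IsInducedPath G P ∧
    ∀ i : Fin P.length, 0 < i.1 → i.1 + 1 < P.length → (G.neighborSet (P.get i)).ncard = 2

def WellOrderedPath {V : Type*} (l P : List V) : Prop :=
  P.Pairwise (fun u v => idx l u < idx l v) ∨ P.Pairwise (fun u v => idx l v < idx l u)

def IsMaxFlatPath {V : Type*} (G : SimpleGraph V) (P : List V) : Prop :=
  IsFlatPath G P ∧ ∀ h : P ≠ [],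
    (G.neighborSet (P.head h)).ncard ≠ 2 ∧ (G.neighborSet (P.getLast h)).ncard ≠ 2

def ClawFree {V : Type*} (G : SimpleGraph V) : Prop :=
  ∀ a b c d : V, G.Adj a b → G.Adj a c → G.Adj a d → b ≠ c → b ≠ d → c ≠ d →
    G.Adj b c ∨ G.Adj b d ∨ G.Adj c d

def IsHole {V : Type*} (G : SimpleGraph V) (C : List V) : Prop :=
  4 ≤ C.length ∧ C.Nodup ∧
    ∀ i j : Fin C.length, G.Adj (C.get i) (C.get j) ↔
      ((i.1 + 1) % C.length = j.1 ∨ (j.1 + 1) % C.length = i.1)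

def GemFree {V : Type*} (G : SimpleGraph V) : Prop :=
  ¬ ∃ a b c d e : V, G.Adj a b ∧ G.Adj b c ∧ G.Adj c d ∧
    ¬ G.Adj a c ∧ ¬ G.Adj a d ∧ ¬ G.Adj b d ∧
    G.Adj e a ∧ G.Adj e b ∧ G.Adj e c ∧ G.Adj e d

section ListAux
variable {α : Type*} [DecidableEq α]

lemma filter_indexOf_lt_iff (p : α → Bool) :
    ∀ (l : List α), l.Nodup → ∀ a b : α, a ∈ l.filter p → b ∈ l.filter p →
      ((l.filter p).idxOf a < (l.filter p).idxOf b ↔ l.idxOf a < l.idxOf b)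
  | [], _, a, b, ha, hb => by simp at ha
  | x :: xs, hnd, a, b, ha, hb => by
    have hnd' : xs.Nodup := (List.nodup_cons.mp hnd).2
    have hx : x ∉ xs := (List.nodup_cons.mp hnd).1
    by_cases hpx : p x
    · rw [List.filter_cons_of_pos hpx] at ha hb ⊢
      by_cases hax : a = x
      · subst hax
        by_cases hbx : b = a
        · subst hbx; simp
        · have hbxs : b ∈ xs.filter p := by
            rcases List.mem_cons.mp hb with h | h
            · exact absurd h hbx
            · exact h
          rw [List.idxOf_cons_self, List.idxOf_cons_self,
            List.idxOf_cons_ne _ (fun h => hbx h.symm),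
            List.idxOf_cons_ne _ (fun h => hbx h.symm)]
          simp
      · have haxs : a ∈ xs.filter p := by
          rcases List.mem_cons.mp ha with h | h
          · exact absurd h hax
          · exact h
        by_cases hbx : b = x
        · subst hbx
          rw [List.idxOf_cons_self, List.idxOf_cons_self,
            List.idxOf_cons_ne _ (fun h => hax h.symm),
            List.idxOf_cons_ne _ (fun h => hax h.symm)]
          simp
        · have hbxs : b ∈ xs.filter p := by
            rcases List.mem_cons.mp hb with h | h
            · exact absurd h hbx
            · exact h
          rw [List.idxOf_cons_ne _ (fun h => hax h.symm),
            List.idxOf_cons_ne _ (fun h => hbx h.symm),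
            List.idxOf_cons_ne _ (fun h => hax h.symm),
            List.idxOf_cons_ne _ (fun h => hbx h.symm)]
          simpa [Nat.succ_lt_succ_iff] using
            filter_indexOf_lt_iff p xs hnd' a b haxs hbxs
    · rw [List.filter_cons_of_neg hpx] at ha hb ⊢
      have hax : a ≠ x := fun h => by
        subst h; exact hx (List.mem_of_mem_filter ha)
      have hbx : b ≠ x := fun h => by
        subst h; exact hx (List.mem_of_mem_filter hb)
      rw [List.idxOf_cons_ne _ (fun h => hax h.symm),
        List.idxOf_cons_ne _ (fun h => hbx h.symm)]
      simpa [Nat.succ_lt_succ_iff] using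
        filter_indexOf_lt_iff p xs hnd' a b ha hb

omit [DecidableEq α] in
lemma mem_attachWith_iff {P : α → Prop} {l : List α} {H : ∀ x ∈ l, P x}
    {a : {x // P x}} : a ∈ l.attachWith P H ↔ a.val ∈ l := by
  constructor
  · intro h
    have := List.mem_map_of_mem (f := Subtype.val) h
    rwa [List.attachWith_map_subtype_val] at this
  · intro h
    have : a.val ∈ (l.attachWith P H).map Subtype.val := by
      rwa [List.attachWith_map_subtype_val]
    obtain ⟨b, hb, hba⟩ := List.mem_map.mp this
    rwa [Subtype.ext hba] at hb

omit [DecidableEq α] in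
lemma nodup_attachWith {P : α → Prop} {l : List α} {H : ∀ x ∈ l, P x}
    (h : l.Nodup) : (l.attachWith P H).Nodup := by
  have : ((l.attachWith P H).map Subtype.val).Nodup := by
    rwa [List.attachWith_map_subtype_val]
  exact this.of_map _

end ListAux

section Conn
variable {V : Type*} {G : SimpleGraph V} {l : List V}

lemma isConnOrder_reach (h : IsConnOrder G l) (hne : l ≠ []) :
    ∀ i : Fin l.length, G.Reachable (l.get ⟨0, List.length_pos_iff.mpr hne⟩) (l.get i) := by
  have key : ∀ n : ℕ, ∀ i : Fin l.length, i.1 = n →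
      G.Reachable (l.get ⟨0, List.length_pos_iff.mpr hne⟩) (l.get i) := by
    intro n
    induction n using Nat.strong_induction_on with
    | _ n ih =>
      intro i hi
      rcases Nat.eq_zero_or_pos n with h0 | hp
      · have hi0 : i = ⟨0, List.length_pos_iff.mpr hne⟩ := by
          apply Fin.ext
          show i.1 = 0
          omega
        rw [hi0]
      · obtain ⟨j, hj, hadj⟩ := h.2.2 i (hi ▸ hp)
        exact (ih j.1 (by omega) j rfl).trans hadj.reachable
  exact fun i => key i.1 i rfl

lemma isConnOrder_connected (h : IsConnOrder G l) (hne : l ≠ []) : G.Connected := by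
  have hpos := List.length_pos_iff.mpr hne
  haveI : Nonempty V := ⟨l.get ⟨0, hpos⟩⟩
  refine SimpleGraph.Connected.mk (fun u v => ?_)
  obtain ⟨iu, hu⟩ := List.mem_iff_get.mp (h.2.1 u)
  obtain ⟨iv, hv⟩ := List.mem_iff_get.mp (h.2.1 v)
  rw [← hu, ← hv]
  exact (isConnOrder_reach h hne iu).symm.trans (isConnOrder_reach h hne iv)

end Conn

section Map
variable {W W' : Type*}

lemma greedyFrom_map (H : SimpleGraph W) (H' : SimpleGraph W') (e : W → W')
    (hinj : Function.Injective e) (hsurj : Function.Surjective e)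
    (hadj : ∀ a b, H'.Adj (e a) (e b) ↔ H.Adj a b) :
    ∀ (m : List W) (f : W → ℕ) (f' : W' → ℕ), (∀ w, f' (e w) = f w) →
      ∀ w, greedyFrom H' f' (m.map e) (e w) = greedyFrom H f m w
  | [], f, f', hf, w => hf w
  | h :: t, f, f', hf, w => by
    show greedyFrom H' (greedyStep H' f' (e h)) (t.map e) (e w)
        = greedyFrom H (greedyStep H f h) t w
    refine greedyFrom_map H H' e hinj hsurj hadj t _ _ ?_ w
    intro u
    unfold greedyStep
    by_cases hu : u = h
    · subst hu
      rw [if_pos rfl, if_pos rfl]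
      congr 1
      ext c
      simp only [Set.mem_setOf_eq]
      constructor
      · rintro ⟨hc, hall⟩
        refine ⟨hc, fun w₂ haw => ?_⟩
        rw [← hf w₂]
        exact hall (e w₂) ((hadj u w₂).mpr haw)
      · rintro ⟨hc, hall⟩
        refine ⟨hc, fun w' haw => ?_⟩
        obtain ⟨w₂, rfl⟩ := hsurj w'
        rw [hf w₂]
        exact hall w₂ ((hadj u w₂).mp haw)
    · rw [if_neg (fun hc => hu (hinj hc)), if_neg hu]
      exact hf u

end Map

section Chi
variable {V : Type*} [Fintype V]

lemma chi_colorable (G : SimpleGraph V) : G.Colorable (chi G) := by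
  have hne : {n : ℕ | G.Colorable n}.Nonempty := ⟨Fintype.card V, G.colorable_of_fintype⟩
  exact Nat.sInf_mem hne

lemma chi_le_of_embedding {W : Type*} [Fintype W] {G : SimpleGraph V} {H : SimpleGraph W}
    (f : G ↪g H) : chi G ≤ chi H :=
  Nat.sInf_le ((chi_colorable H).of_hom f.toHom)

end Chi

lemma good_self {W : Type*} [Fintype W] (H : SimpleGraph W) (hg : Good H)
    (l : List W) (hl : IsConnOrder H l) (hne : l ≠ []) : ∀ w, greedy H l w ≤ chi H := by
  classical
  set s : Finset W := Finset.univ with hs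
  have hmem : ∀ w : W, w ∈ (↑s : Set W) := by simp [hs]
  set e : W → ↥(↑s : Set W) := fun w => ⟨w, hmem w⟩ with he
  have hinj : Function.Injective e := fun a b hab => congrArg Subtype.val hab
  have hsurj : Function.Surjective e := fun x => ⟨x.val, Subtype.ext rfl⟩
  have hadj : ∀ a b, (H.induce (↑s : Set W)).Adj (e a) (e b) ↔ H.Adj a b := fun a b => Iff.rfl
  set l2 : List ↥(↑s : Set W) := l.map e with hl2def
  have hl2 : IsConnOrder (H.induce (↑s : Set W)) l2 := by
    refine ⟨hl.1.map hinj, fun x => ?_, fun i hi => ?_⟩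
    · have : e x.val ∈ l2 := List.mem_map_of_mem (f := e) (hl.2.1 x.val)
      rwa [show e x.val = x from Subtype.ext rfl] at this
    · have hlen : l2.length = l.length := List.length_map _
      set i' : Fin l.length := ⟨i.1, by rw [← hlen]; exact i.2⟩ with hi'
      obtain ⟨j, hj, hadj'⟩ := hl.2.2 i' hi
      refine ⟨⟨j.1, by rw [hlen]; exact j.2⟩, hj, ?_⟩
      have h1 : l2.get ⟨j.1, by rw [hlen]; exact j.2⟩ = e (l.get j) := by
        simp [hl2def, List.getElem_map]
      have h2 : l2.get i = e (l.get i') := by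
        simp [hl2def, List.getElem_map, hi']
      rw [h1, h2]
      exact (hadj _ _).mpr hadj'
  have hne2 : l2 ≠ [] := by
    simp [hl2def, hne]
  have hconn : (H.induce (↑s : Set W)).Connected := isConnOrder_connected hl2 hne2
  have hGO := hg s hconn l2 hl2
  intro w
  have htrans : greedy (H.induce (↑s : Set W)) l2 (e w) = greedy H l w :=
    greedyFrom_map H _ e hinj hsurj hadj l _ _ (fun _ => rfl) w
  calc greedy H l w = greedy (H.induce (↑s : Set W)) l2 (e w) := htrans.symm
    _ ≤ chi (H.induce (↑s : Set W)) := hGO (e w)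
    _ ≤ chi H := chi_le_of_embedding (SimpleGraph.Embedding.induce _)

section Agree
variable {V : Type*} [Fintype V] [DecidableEq V]

/-- the list of vertices outside `D`, as subtype elements -/
def restrictList (D : Finset V) (m : List V) : List ↥(↑(Dᶜ : Finset V) : Set V) :=
  (m.filter (fun x => decide (x ∉ D))).attachWith _
    (fun x hx => by
      have := List.of_mem_filter hx
      simp only [decide_eq_true_eq] at this
      simpa using this)

lemma restrictList_cons_mem (D : Finset V) (h : V) (t : List V) (hh : h ∈ D) :
    restrictList D (h :: t) = restrictList D t := by
  unfold restrictList
  exact List.attachWith_congr (List.filter_cons_of_neg (by simpa using hh))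

lemma restrictList_cons_not_mem (D : Finset V) (h : V) (t : List V) (hh : h ∉ D) :
    restrictList D (h :: t) = ⟨h, by simpa using hh⟩ :: restrictList D t := by
  unfold restrictList
  rw [List.attachWith_congr (List.filter_cons_of_pos (by simpa using hh))]
  rfl

lemma greedy_agree_aux (G : SimpleGraph V) (D : Finset V) (l : List V)
    (hnd : l.Nodup) (hall : ∀ v : V, v ∈ l)
    (hP : ∀ x y, G.Adj x y → y ∈ D → x ∉ D → l.idxOf x < l.idxOf y) :
    ∀ (m pre : List V), l = pre ++ m →
      ∀ (f : V → ℕ) (f' : ↥(↑(Dᶜ : Finset V) : Set V) → ℕ),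
      (∀ (a : V) (ha : a ∈ (↑(Dᶜ : Finset V) : Set V)), f' ⟨a, ha⟩ = f a) →
      (∀ y ∈ D, y ∈ m → f y = 0) →
      ∀ (a : V) (ha : a ∈ (↑(Dᶜ : Finset V) : Set V)),
        greedyFrom (G.induce (↑(Dᶜ : Finset V) : Set V)) f' (restrictList D m) ⟨a, ha⟩
          = greedyFrom G f m a
  | [], pre, hpre, f, f', hf, h0, a, ha => hf a ha
  | h :: t, pre, hpre, f, f', hf, h0, a, ha => by
    have hnm : (h :: t).Nodup := hnd.sublist (by rw [hpre]; exact List.sublist_append_right _ _)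
    have hht : h ∉ t := (List.nodup_cons.mp hnm).1
    have hpre' : l = (pre ++ [h]) ++ t := by rw [hpre]; simp
    have hidxh : l.idxOf h = pre.length := by
      have hhpre : h ∉ pre := by
        have := hnd
        rw [hpre] at this
        exact fun hmem => (List.disjoint_of_nodup_append this) hmem List.mem_cons_self
      rw [hpre, List.idxOf_append_of_notMem hhpre, List.idxOf_cons_self]
      omega
    -- any D-neighbor of a non-D vertex h has f-value 0
    have hw0 : h ∉ D → ∀ w, w ∈ D → G.Adj h w → f w = 0 := by
      intro hhD w hwD hadj
      have hlt : l.idxOf h < l.idxOf w := hP h w hadj hwD hhD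
      have hwm : w ∈ h :: t := by
        have hwl := hall w
        rw [hpre] at hwl
        rcases List.mem_append.mp hwl with hc | hc
        · exfalso
          have : l.idxOf w = pre.idxOf w := by
            rw [hpre]; exact List.idxOf_append_of_mem hc
          have : l.idxOf w < pre.length := by
            rw [this]; exact List.idxOf_lt_length_iff.mpr hc
          omega
        · exact hc
      exact h0 w hwD hwm
    by_cases hhD : h ∈ D
    · rw [restrictList_cons_mem D h t hhD]
      show greedyFrom _ f' (restrictList D t) ⟨a, ha⟩ = greedyFrom G (greedyStep G f h) t a
      refine greedy_agree_aux G D l hnd hall hP t (pre ++ [h]) hpre' (greedyStep G f h) f' ?_ ?_ a ha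
      · intro b hb
        have hbD : b ∉ D := by simpa using hb
        have hbh : b ≠ h := fun hc => hbD (hc ▸ hhD)
        rw [hf b hb]
        unfold greedyStep
        rw [if_neg hbh]
      · intro y hyD hyt
        have hyh : y ≠ h := fun hc => hht (hc ▸ hyt)
        unfold greedyStep
        rw [if_neg hyh]
        exact h0 y hyD (List.mem_cons_of_mem _ hyt)
    · rw [restrictList_cons_not_mem D h t hhD]
      show greedyFrom _ (greedyStep _ f' ⟨h, _⟩) (restrictList D t) ⟨a, ha⟩
          = greedyFrom G (greedyStep G f h) t a
      refine greedy_agree_aux G D l hnd hall hP t (pre ++ [h]) hpre' (greedyStep G f h) _ ?_ ?_ a ha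
      · intro b hb
        unfold greedyStep
        by_cases hbh : b = h
        · subst hbh
          rw [if_pos rfl, if_pos (by rfl)]
          congr 1
          ext c
          simp only [Set.mem_setOf_eq]
          constructor
          · rintro ⟨hc, hcall⟩
            refine ⟨hc, fun w hadj => ?_⟩
            by_cases hwD : w ∈ D
            · rw [hw0 hhD w hwD hadj]
              omega
            · have hwA : w ∈ (↑(Dᶜ : Finset V) : Set V) := by simpa using hwD
              have := hcall ⟨w, hwA⟩ hadj
              rwa [hf w hwA] at this
          · rintro ⟨hc, hcall⟩
            refine ⟨hc, fun w hadj => ?_⟩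
            rw [hf w.1 w.2]
            exact hcall w.1 hadj
        · have : (⟨b, hb⟩ : ↥(↑(Dᶜ : Finset V) : Set V)) ≠ ⟨h, by simpa using hhD⟩ :=
            fun hc => hbh (congrArg Subtype.val hc)
          rw [if_neg this, if_neg hbh]
          exact hf b hb
      · intro y hyD hyt
        have hyh : y ≠ h := fun hc => hhD (hc ▸ hyD)
        unfold greedyStep
        rw [if_neg hyh]
        exact h0 y hyD (List.mem_cons_of_mem _ hyt)

end Agree

section Removal
variable {V : Type*} [Fintype V]

lemma attachWith_get_val {α : Type*} {P : α → Prop} {xs : List α} {H : ∀ x ∈ xs, P x}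
    (i : Fin (xs.attachWith P H).length) :
    ((xs.attachWith P H).get i).val = xs.get ⟨i.1, by simpa using i.2⟩ := by
  rw [List.get_eq_getElem, List.get_eq_getElem, List.getElem_attachWith]

lemma removal [DecidableEq V] (G : SimpleGraph V) (l : List V)
    (hmin : MinimallyBad G) (hord : IsConnOrder G l)
    (D : Finset V) (hDne : D.Nonempty)
    (hP : ∀ x y, G.Adj x y → y ∈ D → x ∉ D → l.idxOf x < l.idxOf y)
    (v : V) (hv : v ∉ D) (hbad : chi G < greedy G l v) : False := by
  set s : Finset V := Dᶜ with hs
  set SG := G.induce (↑s : Set V) with hSG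
  set lf := l.filter (fun x => decide (x ∉ D)) with hlf
  set l' := restrictList D l with hl'
  have hlfnd : lf.Nodup := hord.1.filter _
  have hmem_lf : ∀ x : V, x ∈ lf ↔ x ∉ D := fun x => by
    simp [hlf, List.mem_filter, hord.2.1 x]
  have hlen' : l'.length = lf.length := by
    rw [hl']; unfold restrictList
    rw [List.length_attachWith]
  have hget' : ∀ (i : Fin l'.length), (l'.get i).val
      = lf.get ⟨i.1, by rw [← hlen']; exact i.2⟩ := by
    intro i
    exact attachWith_get_val i
  have hordl' : IsConnOrder SG l' := by
    refine ⟨?_, ?_, ?_⟩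
    · rw [hl']; unfold restrictList; exact nodup_attachWith hlfnd
    · intro a
      rw [hl']; unfold restrictList
      rw [mem_attachWith_iff]
      exact (hmem_lf a.val).mpr (by simpa [hs] using a.2)
    · intro i hi
      set i2 : Fin lf.length := ⟨i.1, by rw [← hlen']; exact i.2⟩ with hi2
      set x : V := lf.get i2 with hx
      have hxlf : x ∈ lf := List.get_mem lf i2
      have hxl : x ∈ l := List.mem_of_mem_filter hxlf
      have hxD : x ∉ D := (hmem_lf x).mp hxlf
      have hidx_lf_x : lf.idxOf x = i.1 := by
        rw [hx]; exact List.get_idxOf hlfnd i2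
      have h0lt : (0 : ℕ) < lf.length := lt_of_le_of_lt (Nat.zero_le _) i2.2
      set y0 : V := lf.get ⟨0, h0lt⟩ with hy0
      have hy0lf : y0 ∈ lf := List.get_mem lf ⟨0, h0lt⟩
      have hidx_lf_y0 : lf.idxOf y0 = 0 := by
        rw [hy0]; exact List.get_idxOf hlfnd _
      have hk0 : l.idxOf y0 < l.idxOf x := by
        have := (filter_indexOf_lt_iff _ l hord.1 y0 x hy0lf hxlf).mp
          (by rw [hidx_lf_x, hidx_lf_y0]; exact hi)
        exact this
      set k : ℕ := l.idxOf x with hk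
      have hkpos : 0 < k := lt_of_le_of_lt (Nat.zero_le _) hk0
      have hklen : k < l.length := List.idxOf_lt_length_iff.mpr hxl
      have hxk : l.get ⟨k, hklen⟩ = x := List.idxOf_get hklen
      obtain ⟨j, hj, hadjj⟩ := hord.2.2 ⟨k, hklen⟩ hkpos
      have hj' : j.1 < k := hj
      set y : V := l.get j with hy
      have hadjyx : G.Adj y x := by rwa [hxk] at hadjj
      have hyl : y ∈ l := List.get_mem l j
      have hjy : l.idxOf y = j.1 := List.get_idxOf hord.1 j
      have hyD : y ∉ D := by
        intro hyD
        have := hP x y hadjyx.symm hyD hxD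
        omega
      have hylf : y ∈ lf := (hmem_lf y).mpr hyD
      have hj'lt : lf.idxOf y < i.1 := by
        rw [← hidx_lf_x]
        exact (filter_indexOf_lt_iff _ l hord.1 y x hylf hxlf).mpr (by omega)
      have hj'len : lf.idxOf y < l'.length := by
        rw [hlen']; exact List.idxOf_lt_length_iff.mpr hylf
      refine ⟨⟨lf.idxOf y, hj'len⟩, hj'lt, ?_⟩
      have hvalj : (l'.get ⟨lf.idxOf y, hj'len⟩).val = y := by
        rw [hget']
        exact List.idxOf_get (by rw [← hlen']; exact hj'len)
      have hvali : (l'.get i).val = x := (hget' i).trans rfl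
      show G.Adj (l'.get ⟨lf.idxOf y, hj'len⟩).val (l'.get i).val
      rw [hvalj, hvali]
      exact hadjyx
  have hvA : v ∈ (↑s : Set V) := by simpa [hs] using hv
  have hne' : l' ≠ [] := by
    intro hc
    have := hordl'.2.1 ⟨v, hvA⟩
    rw [hc] at this
    simp at this
  have hconn : SG.Connected := isConnOrder_connected hordl' hne'
  have hneq : s ≠ Finset.univ := by
    obtain ⟨d, hd⟩ := hDne
    intro hc
    have hds : d ∈ s := hc ▸ Finset.mem_univ d
    rw [hs, Finset.mem_compl] at hds
    exact hds hd
  have hGood : Good SG := hmin.2 s hneq hconn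
  have hle := good_self SG hGood l' hordl' hne' ⟨v, hvA⟩
  have hagree : greedy SG l' ⟨v, hvA⟩ = greedy G l v :=
    greedy_agree_aux G D l hord.1 hord.2.1 hP l [] rfl _ _
      (fun a ha => rfl) (fun y hy hym => rfl) v hvA
  have hchi : chi SG ≤ chi G := chi_le_of_embedding (SimpleGraph.Embedding.induce _)
  rw [hagree] at hle
  omega

end Removal

set_option maxHeartbeats 1000000 in
theorem stmt6 {V : Type*} [Fintype V] (G : SimpleGraph V) (l : List V)
    (hmin : MinimallyBad G) (hbad : BadOrder G l)
    (vn : V) (hvn : l.getLast? = some vn)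
    (S : Finset V) (hcut : ¬ (G.induce ((↑S : Set V)ᶜ)).Preconnected) :
    (∀ c₁ c₂ : (G.induce ((↑S : Set V)ᶜ)).ConnectedComponent, c₁ ≠ c₂ →
      maxIdx l (Subtype.val '' c₁.supp) < maxIdx l (↑S : Set V) ∨
      maxIdx l (Subtype.val '' c₂.supp) < maxIdx l (↑S : Set V)) ∧
    (∀ c : (G.induce ((↑S : Set V)ᶜ)).ConnectedComponent,
      maxIdx l (↑S : Set V) < maxIdx l (Subtype.val '' c.supp) →
      vn ∈ Subtype.val '' c.supp) := by
  classical
  have hord := hbad.1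
  have hnd := hord.1
  have hmem := hord.2.1
  have hlne : l ≠ [] := by
    intro hc; rw [hc] at hvn; simp at hvn
  have hvn' : vn = l.getLast hlne := by
    rw [List.getLast?_eq_getLast hlne] at hvn
    exact (Option.some_injective _ hvn).symm
  have hpos : 0 < l.length := List.length_pos_iff.mpr hlne
  have hidxvn : idx l vn = l.length - 1 := by
    have h1 : vn = l.get ⟨l.length - 1, by omega⟩ := by
      rw [hvn', List.getLast_eq_getElem]
      rfl
    rw [h1]
    exact List.get_idxOf hnd _
  have hidx_lt : ∀ y : V, idx l y < l.length := fun y =>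
    List.idxOf_lt_length_iff.mpr (hmem y)
  have hidx_le_vn : ∀ y : V, idx l y ≤ idx l vn := by
    intro y
    rw [hidxvn]
    have := hidx_lt y
    omega
  have hmax_mem : ∀ A : Set V, A.Nonempty → ∃ z ∈ A, idx l z = maxIdx l A := by
    intro A hA
    have : maxIdx l A ∈ idx l '' A := Nat.sSup_mem (hA.image _) (Set.toFinite _).bddAbove
    obtain ⟨z, hz, hz'⟩ := this
    exact ⟨z, hz, hz'⟩
  have hle_max : ∀ (A : Set V) (y : V), y ∈ A → idx l y ≤ maxIdx l A := fun A y hy =>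
    le_csSup (Set.toFinite _).bddAbove ⟨y, hy, rfl⟩
  obtain ⟨v, hv⟩ : ∃ v, chi G < greedy G l v := by
    have h2 := hbad.2
    simp only [GoodOrder, not_forall, not_le] at h2
    exact h2
  set t := maxIdx l (↑S : Set V) with ht
  -- the key claim
  have star : ∀ c : (G.induce ((↑S : Set V)ᶜ)).ConnectedComponent,
      t < maxIdx l (Subtype.val '' c.supp) → vn ∈ Subtype.val '' c.supp := by
    intro c hc
    by_contra hvnC
    set Cv : Set V := Subtype.val '' c.supp with hCv
    obtain ⟨w, hw⟩ := c.exists_rep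
    have hCvne : Cv.Nonempty :=
      ⟨w.val, ⟨w, (SimpleGraph.ConnectedComponent.mem_supp_iff _ _).mpr hw, rfl⟩⟩
    obtain ⟨z, hzC, hz⟩ := hmax_mem Cv hCvne
    have hzt : t < idx l z := by rw [hz]; exact hc
    have hvnS : vn ∉ (↑S : Set V) := by
      intro hvnS
      have h1 : idx l vn ≤ t := hle_max _ _ hvnS
      have h2 : idx l z ≤ idx l vn := hidx_le_vn z
      omega
    have hCvS : ∀ x : V, x ∈ Cv → x ∉ (↑S : Set V) := by
      intro x hx hxS
      obtain ⟨x', hx', hxv⟩ := hx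
      exact (hxv ▸ x'.2) hxS
    have hcomp : ∀ x y : V, G.Adj x y → y ∈ Cv → x ∉ (↑S : Set V) → x ∈ Cv := by
      intro x y hadj hy hxS
      obtain ⟨y', hy', hyv⟩ := hy
      have hx' : x ∈ ((↑S : Set V)ᶜ) := hxS
      have hadj' : (G.induce ((↑S : Set V)ᶜ)).Adj ⟨x, hx'⟩ y' := by
        show G.Adj x y'.val
        rw [hyv]; exact hadj
      have hmk : (G.induce ((↑S : Set V)ᶜ)).connectedComponentMk ⟨x, hx'⟩ = c := by
        rw [← (SimpleGraph.ConnectedComponent.mem_supp_iff _ _).mp hy']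
        exact SimpleGraph.ConnectedComponent.sound hadj'.reachable
      exact ⟨⟨x, hx'⟩, (SimpleGraph.ConnectedComponent.mem_supp_iff _ _).mpr hmk, rfl⟩
    set D1 : Finset V := Finset.univ.filter (fun x => x ∈ Cv ∧ t < idx l x) with hD1
    have hD1mem : ∀ x : V, x ∈ D1 ↔ (x ∈ Cv ∧ t < idx l x) := by
      intro x; simp [hD1]
    set D2 : Finset V :=
      Finset.univ.filter (fun x => x ∉ Cv ∧ x ∉ (↑S : Set V) ∧ t < idx l x) with hD2
    have hD2mem : ∀ x : V, x ∈ D2 ↔ (x ∉ Cv ∧ x ∉ (↑S : Set V) ∧ t < idx l x) := by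
      intro x; simp [hD2]
    have hP1 : ∀ x y, G.Adj x y → y ∈ D1 → x ∉ D1 → l.idxOf x < l.idxOf y := by
      intro x y hadj hyD hxD
      rw [hD1mem] at hyD hxD
      obtain ⟨hyC, hyt⟩ := hyD
      show idx l x < idx l y
      by_cases hxS : x ∈ (↑S : Set V)
      · exact lt_of_le_of_lt (hle_max _ _ hxS) hyt
      · have hxC : x ∈ Cv := hcomp x y hadj hyC hxS
        have hnlt : ¬ t < idx l x := fun hlt => hxD ⟨hxC, hlt⟩
        exact lt_of_le_of_lt (not_lt.mp hnlt) hyt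
    have hP2 : ∀ x y, G.Adj x y → y ∈ D2 → x ∉ D2 → l.idxOf x < l.idxOf y := by
      intro x y hadj hyD hxD
      rw [hD2mem] at hyD hxD
      obtain ⟨hyC, hyS, hyt⟩ := hyD
      show idx l x < idx l y
      by_cases hxS : x ∈ (↑S : Set V)
      · exact lt_of_le_of_lt (hle_max _ _ hxS) hyt
      · have hxC : x ∉ Cv := by
          intro hxCv
          exact hyC (hcomp y x hadj.symm hxCv hyS)
        have hnlt : ¬ t < idx l x := fun hlt => hxD ⟨hxC, hxS, hlt⟩
        exact lt_of_le_of_lt (not_lt.mp hnlt) hyt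
    have hD1ne : D1.Nonempty := ⟨z, (hD1mem z).mpr ⟨hzC, hzt⟩⟩
    have hD2ne : D2.Nonempty := by
      refine ⟨vn, (hD2mem vn).mpr ⟨hvnC, hvnS, ?_⟩⟩
      have := hidx_le_vn z
      omega
    by_cases hvD1 : v ∈ D1
    · have hvD2 : v ∉ D2 := by
        rw [hD2mem]
        intro hcon
        exact hcon.1 ((hD1mem v).mp hvD1).1
      exact removal G l hmin hord D2 hD2ne hP2 v hvD2 hv
    · exact removal G l hmin hord D1 hD1ne hP1 v hvD1 hv
  -- S is nonempty, else G - S = G is connected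
  have hSne : S.Nonempty := by
    rw [Finset.nonempty_iff_ne_empty]
    intro hSe
    apply hcut
    subst hSe
    have hGconn : G.Connected := isConnOrder_connected hord hlne
    have huniv : ((↑(∅ : Finset V) : Set V))ᶜ = Set.univ := by simp
    rw [huniv]
    intro a b
    have hr : G.Reachable a.val b.val := hGconn.preconnected a.val b.val
    have hmap := hr.map (G.induceUnivIso.symm.toHom)
    have ha : G.induceUnivIso.symm.toHom a.val = a := Subtype.ext rfl
    have hb : G.induceUnivIso.symm.toHom b.val = b := Subtype.ext rfl
    rwa [ha, hb] at hmap
  obtain ⟨s₀, hs₀S, hs₀⟩ := hmax_mem (↑S : Set V) (Finset.coe_nonempty.mpr hSne)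
  have hstrict : ∀ c : (G.induce ((↑S : Set V)ᶜ)).ConnectedComponent,
      t ≤ maxIdx l (Subtype.val '' c.supp) → t < maxIdx l (Subtype.val '' c.supp) := by
    intro c hle
    rcases lt_or_eq_of_le hle with h | h
    · exact h
    · exfalso
      obtain ⟨w, hw⟩ := c.exists_rep
      have hCvne : (Subtype.val '' c.supp).Nonempty :=
        ⟨w.val, ⟨w, (SimpleGraph.ConnectedComponent.mem_supp_iff _ _).mpr hw, rfl⟩⟩
      obtain ⟨z, hzC, hz⟩ := hmax_mem _ hCvne
      have hzs : z = s₀ := by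
        have h1 : idx l z = idx l s₀ := by rw [hz, hs₀, ← h]
        exact (List.idxOf_inj (hmem z)).mp h1
      obtain ⟨z', hz', hzv⟩ := hzC
      have hzS : z ∈ (↑S : Set V) := hzs ▸ hs₀S
      exact (hzv ▸ z'.2) hzS
  refine ⟨?_, fun c hc => star c hc⟩
  intro c₁ c₂ hne12
  by_contra hcon
  push_neg at hcon
  obtain ⟨h1, h2⟩ := hcon
  have hv1 := star c₁ (hstrict c₁ h1)
  have hv2 := star c₂ (hstrict c₂ h2)
  obtain ⟨x₁, hx₁, hx₁v⟩ := hv1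
  obtain ⟨x₂, hx₂, hx₂v⟩ := hv2
  have hx12 : x₁ = x₂ := Subtype.ext (by rw [hx₁v, hx₂v])
  rw [SimpleGraph.ConnectedComponent.mem_supp_iff] at hx₁ hx₂
  exact hne12 (by rw [← hx₁, hx12, hx₂])
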